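/- Define f(η) = A_0(η)/(A_2(η) − A_4(η)). Then there exists a unique η* ∈ ℝ such that f is strictly decreasing on (−∞, η*] and strictly increasing on [η*, +∞); moreover η* < 0, f(0) = 15/2 and f'(0) = 5/7. -/

import Mathlib

open Real MeasureTheory Set Filter

/-- `A k η = ∫_0^1 z^k e^{-η z²} dz`. -/
noncomputable def A (k : ℕ) (η : ℝ) : ℝ :=
  ∫ z in (0:ℝ)..1, z ^ k * Real.exp (-η * z ^ 2)

/-- `B(η, α) = 3 e^{-η} / A₀(η) − (3 − 2η + 4η²/α)`. -/
noncomputable def B (η α : ℝ) : ℝ :=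
  3 * Real.exp (-η) / A 0 η - (3 - 2 * η + 4 * η ^ 2 / α)

section Aux
open intervalIntegral


lemma contA (k : ℕ) (η : ℝ) : Continuous fun z : ℝ => z ^ k * Real.exp (-η * z ^ 2) := by
  fun_prop

lemma intA (k : ℕ) (η : ℝ) :
    IntervalIntegrable (fun z : ℝ => z ^ k * Real.exp (-η * z ^ 2)) volume 0 1 :=
  (contA k η).intervalIntegrable _ _

lemma A_zero (k : ℕ) : A k 0 = 1 / (k + 1) := by
  simp [A, integral_pow]

lemma hasDerivA (k : ℕ) (η : ℝ) : HasDerivAt (A k) (-A (k + 2) η) η := by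
  have key := intervalIntegral.hasDerivAt_integral_of_dominated_loc_of_deriv_le
    (F := fun (x : ℝ) (t : ℝ) => t ^ k * Real.exp (-x * t ^ 2))
    (F' := fun (x : ℝ) (t : ℝ) => -(t ^ (k + 2) * Real.exp (-x * t ^ 2)))
    (x₀ := η) (a := 0) (b := 1) (μ := volume)
    (bound := fun _ => Real.exp (|η| + 1)) (s := Metric.ball η 1) (Metric.ball_mem_nhds η one_pos)
    (Filter.Eventually.of_forall fun x => (contA k x).aestronglyMeasurable)
    (intA k η)
    (((contA (k + 2) η).neg).aestronglyMeasurable)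
    ?_ (intervalIntegrable_const) ?_
  · have h2 : (∫ t in (0:ℝ)..1, -(t ^ (k + 2) * Real.exp (-η * t ^ 2))) = -A (k + 2) η := by
      rw [intervalIntegral.integral_neg]; rfl
    rw [h2] at key
    exact key.2
  · refine Filter.Eventually.of_forall fun t ht x hx => ?_
    rw [Set.uIoc_of_le (by norm_num : (0:ℝ) ≤ 1)] at ht
    have ht0 : 0 < t := ht.1
    have ht1 : t ≤ 1 := ht.2
    have h1 : |(-(t ^ (k + 2) * Real.exp (-x * t ^ 2)))| = t ^ (k + 2) * Real.exp (-x * t ^ 2) := by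
      rw [abs_neg, abs_of_nonneg]; positivity
    rw [Real.norm_eq_abs, h1]
    have hp : t ^ (k + 2) ≤ 1 := pow_le_one₀ ht0.le ht1
    have hx' : |x| ≤ |η| + 1 := by
      have := abs_sub_abs_le_abs_sub x η
      have hb : |x - η| < 1 := by simpa [Real.dist_eq] using Metric.mem_ball.mp hx
      linarith
    have he : Real.exp (-x * t ^ 2) ≤ Real.exp (|η| + 1) := by
      apply Real.exp_le_exp.mpr
      have h2 : -x * t ^ 2 ≤ |x| * t ^ 2 := by nlinarith [neg_abs_le x, sq_nonneg t]
      have ht2 : t ^ 2 ≤ 1 := by nlinarith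
      have h3 : |x| * t ^ 2 ≤ |x| := by nlinarith [abs_nonneg x]
      linarith
    calc t ^ (k + 2) * Real.exp (-x * t ^ 2) ≤ 1 * Real.exp (|η| + 1) := by
          apply mul_le_mul hp he (by positivity) (by norm_num)
      _ = Real.exp (|η| + 1) := one_mul _
  · refine Filter.Eventually.of_forall fun t ht x hx => ?_
    have h : HasDerivAt (fun x : ℝ => -x * t ^ 2) (-t ^ 2) x := by
      simpa using ((hasDerivAt_id x).neg.mul_const (t ^ 2))
    have h2 := (h.exp).const_mul (t ^ k)
    exact h2.congr_deriv (by ring)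




lemma B_eq (η : ℝ) : A 2 η - A 4 η =
    ∫ z in (0:ℝ)..1, (z ^ 2 - z ^ 4) * Real.exp (-η * z ^ 2) := by
  rw [A, A, ← intervalIntegral.integral_sub (intA 2 η) (intA 4 η)]
  congr 1; ext z; ring

lemma posB (η : ℝ) : 0 < A 2 η - A 4 η := by
  rw [B_eq]
  apply intervalIntegral.intervalIntegral_pos_of_pos_on
    ((by fun_prop : Continuous fun z : ℝ =>
      (z ^ 2 - z ^ 4) * Real.exp (-η * z ^ 2)).intervalIntegrable _ _)
  · intro x hx
    obtain ⟨h0, h1'⟩ := hx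
    have h1 : 0 < x ^ 2 - x ^ 4 := by
      nlinarith [mul_pos (mul_pos h0 h0) (mul_pos (sub_pos.mpr h1') (by linarith : (0:ℝ) < 1 + x))]
    positivity
  · norm_num

lemma posA0 (η : ℝ) : 0 < A 0 η := by
  rw [A]
  apply intervalIntegral.intervalIntegral_pos_of_pos_on (intA 0 η)
  · intro x hx; positivity
  · norm_num

lemma Aval (η : ℝ) : 0 < A 0 η := posA0 η




noncomputable def Nf (η : ℝ) : ℝ :=
  A 0 η * (A 4 η - A 6 η) - A 2 η * (A 2 η - A 4 η)

noncomputable def Mf (η : ℝ) : ℝ := Real.exp η * Nf η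

/-- Cauchy–Schwarz gap. -/
noncomputable def CS (η : ℝ) : ℝ :=
  A 0 η * (A 4 η - 2 * A 6 η + A 8 η) - (A 2 η - A 4 η) ^ 2

lemma hasDerivN (η : ℝ) : HasDerivAt Nf (CS η - Nf η) η := by
  have h := ((hasDerivA 0 η).mul ((hasDerivA 4 η).sub (hasDerivA 6 η))).sub
    ((hasDerivA 2 η).mul ((hasDerivA 2 η).sub (hasDerivA 4 η)))
  exact h.congr_deriv (by unfold CS Nf; simp only [Pi.sub_apply]; ring)

lemma hasDerivM (η : ℝ) : HasDerivAt Mf (Real.exp η * CS η) η := by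
  have h := (Real.hasDerivAt_exp η).mul (hasDerivN η)
  exact h.congr_deriv (by ring)

lemma sq_expand (η lam : ℝ) :
    (∫ z in (0:ℝ)..1, (z ^ 2 - z ^ 4 - lam) ^ 2 * Real.exp (-η * z ^ 2)) =
      (A 4 η - 2 * A 6 η + A 8 η) - 2 * lam * (A 2 η - A 4 η) + lam ^ 2 * A 0 η := by
  have e1 : (fun z : ℝ => (z ^ 2 - z ^ 4 - lam) ^ 2 * Real.exp (-η * z ^ 2)) =
      fun z : ℝ =>
        (z ^ 4 * Real.exp (-η * z ^ 2) - 2 * (z ^ 6 * Real.exp (-η * z ^ 2)) +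
          z ^ 8 * Real.exp (-η * z ^ 2)) -
        2 * lam * (z ^ 2 * Real.exp (-η * z ^ 2) - z ^ 4 * Real.exp (-η * z ^ 2)) +
        lam ^ 2 * (z ^ 0 * Real.exp (-η * z ^ 2)) := by
    ext z; ring
  rw [e1]
  have i468 : IntervalIntegrable (fun z : ℝ =>
      z ^ 4 * Real.exp (-η * z ^ 2) - 2 * (z ^ 6 * Real.exp (-η * z ^ 2)) +
        z ^ 8 * Real.exp (-η * z ^ 2)) volume 0 1 :=
    ((intA 4 η).sub ((intA 6 η).const_mul 2)).add (intA 8 η)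
  have i24 : IntervalIntegrable (fun z : ℝ =>
      z ^ 2 * Real.exp (-η * z ^ 2) - z ^ 4 * Real.exp (-η * z ^ 2)) volume 0 1 :=
    (intA 2 η).sub (intA 4 η)
  rw [intervalIntegral.integral_add (i468.sub (i24.const_mul (2 * lam)))
      ((intA 0 η).const_mul (lam ^ 2)),
    intervalIntegral.integral_sub i468 (i24.const_mul (2 * lam)),
    intervalIntegral.integral_add ((intA 4 η).sub ((intA 6 η).const_mul 2)) (intA 8 η),
    intervalIntegral.integral_sub (intA 4 η) ((intA 6 η).const_mul 2),
    intervalIntegral.integral_const_mul, intervalIntegral.integral_const_mul,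
    intervalIntegral.integral_sub (intA 2 η) (intA 4 η),
    intervalIntegral.integral_const_mul]
  simp only [A]

lemma exp_lb (η z : ℝ) (hz : z ∈ Set.Icc (0:ℝ) 1) :
    Real.exp (-|η|) ≤ Real.exp (-η * z ^ 2) := by
  apply Real.exp_le_exp.mpr
  have h1 : z ^ 2 ≤ 1 := by nlinarith [hz.1, hz.2]
  have h2 : η * z ^ 2 ≤ |η| := by
    calc η * z ^ 2 ≤ |η| * z ^ 2 := by nlinarith [le_abs_self η, sq_nonneg z]
      _ ≤ |η| := by nlinarith [abs_nonneg η]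
  linarith

lemma Jpos (η lam : ℝ) :
    0 < ∫ z in (0:ℝ)..1, (z ^ 2 - z ^ 4 - lam) ^ 2 * Real.exp (-η * z ^ 2) := by
  set g : ℝ → ℝ := fun z => (z ^ 2 - z ^ 4 - lam) ^ 2 * Real.exp (-η * z ^ 2) with hg
  have hgc : Continuous g := by fun_prop
  have hgnn : ∀ z, 0 ≤ g z := fun z => by positivity
  have key : ∀ a b : ℝ, 0 ≤ a → a ≤ b → b ≤ 1 →
      (∀ z ∈ Set.Icc a b, 0.009 ≤ (z ^ 2 - z ^ 4 - lam) ^ 2) →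
      (0.009 * Real.exp (-|η|)) * (b - a) ≤ ∫ z in (0:ℝ)..1, g z := by
    intro a b ha hab hb1 hlb
    have h1 : (∫ z in a..b, (0.009 * Real.exp (-|η|))) ≤ ∫ z in a..b, g z := by
      apply intervalIntegral.integral_mono_on hab intervalIntegrable_const
        (hgc.intervalIntegrable _ _)
      intro z hz
      have hz' : z ∈ Set.Icc (0:ℝ) 1 := ⟨le_trans ha hz.1, le_trans hz.2 hb1⟩
      have := exp_lb η z hz'
      have := hlb z hz
      have hen : (0:ℝ) < Real.exp (-|η|) := Real.exp_pos _
      calc (0.009:ℝ) * Real.exp (-|η|) ≤ (z ^ 2 - z ^ 4 - lam) ^ 2 * Real.exp (-|η|) := by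
            nlinarith
        _ ≤ (z ^ 2 - z ^ 4 - lam) ^ 2 * Real.exp (-η * z ^ 2) := by nlinarith [sq_nonneg (z ^ 2 - z ^ 4 - lam)]
      -- done
    have h2 : (∫ z in a..b, g z) ≤ ∫ z in (0:ℝ)..1, g z := by
      rw [← intervalIntegral.integral_add_adjacent_intervals
          (hgc.intervalIntegrable 0 a) (hgc.intervalIntegrable a 1),
        ← intervalIntegral.integral_add_adjacent_intervals
          (hgc.intervalIntegrable a b) (hgc.intervalIntegrable b 1)]
      have hnn1 : 0 ≤ ∫ z in (0:ℝ)..a, g z :=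
        intervalIntegral.integral_nonneg ha (fun u _ => hgnn u)
      have hnn2 : 0 ≤ ∫ z in b..(1:ℝ), g z :=
        intervalIntegral.integral_nonneg hb1 (fun u _ => hgnn u)
      linarith
    rw [intervalIntegral.integral_const, smul_eq_mul] at h1
    calc (0.009 * Real.exp (-|η|)) * (b - a) = (b - a) * (0.009 * Real.exp (-|η|)) := by ring
      _ ≤ ∫ z in a..b, g z := h1
      _ ≤ _ := h2
  rcases le_or_gt lam 0.135 with hl | hl
  · have h := key 0.6 0.8 (by norm_num) (by norm_num) (by norm_num) ?_
    · have : (0:ℝ) < (0.009 * Real.exp (-|η|)) * (0.8 - 0.6) := by positivity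
      linarith
    · intro z hz
      obtain ⟨hz1, hz2⟩ := hz
      have h36 : (0:ℝ) ≤ z ^ 2 - 0.36 := by nlinarith
      have h64 : (0:ℝ) ≤ 0.64 - z ^ 2 := by nlinarith
      have hu : (0.2304:ℝ) ≤ z ^ 2 - z ^ 4 := by nlinarith [mul_nonneg h36 h64]
      nlinarith
  · have h := key 0 0.2 (by norm_num) (by norm_num) (by norm_num) ?_
    · have : (0:ℝ) < (0.009 * Real.exp (-|η|)) * (0.2 - 0) := by positivity
      linarith
    · intro z hz
      obtain ⟨hz1, hz2⟩ := hz
      have hzsq : z ^ 2 ≤ 0.04 := by nlinarith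
      have hu1 : z ^ 2 - z ^ 4 ≤ 0.04 := by nlinarith [sq_nonneg (z ^ 2)]
      have hu2 : 0 ≤ z ^ 2 - z ^ 4 := by nlinarith [mul_nonneg (sq_nonneg z) (by nlinarith : (0:ℝ) ≤ 1 - z ^ 2)]
      nlinarith

lemma CSpos (η : ℝ) : 0 < CS η := by
  have hA0 := posA0 η
  have hJ := Jpos η ((A 2 η - A 4 η) / A 0 η)
  rw [sq_expand] at hJ
  have key : CS η = A 0 η *
      ((A 4 η - 2 * A 6 η + A 8 η) - 2 * ((A 2 η - A 4 η) / A 0 η) * (A 2 η - A 4 η) +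
        ((A 2 η - A 4 η) / A 0 η) ^ 2 * A 0 η) := by
    unfold CS
    field_simp
    ring
  rw [key]
  positivity




lemma exp95_int :
    (∫ z in (0:ℝ)..(0.95:ℝ), Real.exp (95 * z)) = (Real.exp 90.25 - 1) / 95 := by
  have h : ∀ z ∈ Set.uIcc (0:ℝ) (0.95:ℝ),
      HasDerivAt (fun y : ℝ => Real.exp (95 * y) / 95) (Real.exp (95 * z)) z := by
    intro z _
    have h1 : HasDerivAt (fun y : ℝ => 95 * y) 95 z := by
      simpa using (hasDerivAt_id z).const_mul (95:ℝ)
    have := (h1.exp).div_const 95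
    exact this.congr_deriv (by field_simp)
  rw [intervalIntegral.integral_eq_sub_of_hasDerivAt h
    ((by fun_prop : Continuous fun z : ℝ => Real.exp (95 * z)).intervalIntegrable _ _)]
  norm_num
  ring

lemma posdiff : 0 < A 0 (-100) - (15 / 2) * (A 2 (-100) - A 4 (-100)) := by
  set η₀ : ℝ := -100 with hη₀
  have qint : A 0 η₀ - (15 / 2) * (A 2 η₀ - A 4 η₀) =
      ∫ z in (0:ℝ)..1, (z ^ 0 * Real.exp (-η₀ * z ^ 2) -
        (15 / 2) * (z ^ 2 * Real.exp (-η₀ * z ^ 2) - z ^ 4 * Real.exp (-η₀ * z ^ 2))) := by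
    rw [intervalIntegral.integral_sub (intA 0 η₀)
        (((intA 2 η₀).sub (intA 4 η₀)).const_mul (15 / 2)),
      intervalIntegral.integral_const_mul,
      intervalIntegral.integral_sub (intA 2 η₀) (intA 4 η₀)]
    simp only [A]
  set g : ℝ → ℝ := fun z => z ^ 0 * Real.exp (-η₀ * z ^ 2) -
      (15 / 2) * (z ^ 2 * Real.exp (-η₀ * z ^ 2) - z ^ 4 * Real.exp (-η₀ * z ^ 2)) with hgdef
  have hgc : Continuous g := by fun_prop
  have hsplit : (∫ z in (0:ℝ)..1, g z) =
      (∫ z in (0:ℝ)..(0.95:ℝ), g z) + ∫ z in (0.95:ℝ)..1, g z :=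
    (intervalIntegral.integral_add_adjacent_intervals
      (hgc.intervalIntegrable _ _) (hgc.intervalIntegrable _ _)).symm
  have h2 : (0.05 : ℝ) * (0.34 * Real.exp 90.25) ≤ ∫ z in (0.95:ℝ)..1, g z := by
    have hlb : ∀ z ∈ Set.Icc (0.95:ℝ) 1, (0.34 * Real.exp 90.25 : ℝ) ≤ g z := by
      intro z hz
      obtain ⟨hz1, hz2⟩ := hz
      have ht : (0.9025:ℝ) ≤ z ^ 2 := by nlinarith
      have ht1 : z ^ 2 ≤ 1 := by nlinarith
      have hq : (0.34:ℝ) ≤ 1 - (15 / 2) * (z ^ 2 - z ^ 4) := by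
        nlinarith [mul_nonneg (by nlinarith : (0:ℝ) ≤ z ^ 2 - 0.9025)
          (by nlinarith : (0:ℝ) ≤ z ^ 2 - 0.0975)]
      have hE : Real.exp 90.25 ≤ Real.exp (-η₀ * z ^ 2) := by
        apply Real.exp_le_exp.mpr
        rw [hη₀]; nlinarith
      have hgz : g z = (1 - (15 / 2) * (z ^ 2 - z ^ 4)) * Real.exp (-η₀ * z ^ 2) := by
        rw [hgdef]; ring
      rw [hgz]
      have hEpos := Real.exp_pos (90.25:ℝ)
      nlinarith
    have hmono2 := intervalIntegral.integral_mono_on (μ := volume) (by norm_num : (0.95:ℝ) ≤ 1)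
      (_root_.intervalIntegrable_const (c := (0.34 * Real.exp 90.25 : ℝ)))
      (hgc.intervalIntegrable _ _) hlb
    rw [intervalIntegral.integral_const, smul_eq_mul] at hmono2
    calc (0.05:ℝ) * (0.34 * Real.exp 90.25) = (1 - 0.95) * (0.34 * Real.exp 90.25) := by norm_num
      _ ≤ _ := hmono2
  have h1 : -(0.875 * ((Real.exp 90.25 - 1) / 95)) ≤ ∫ z in (0:ℝ)..(0.95:ℝ), g z := by
    have hlow : ∀ z ∈ Set.Icc (0:ℝ) (0.95:ℝ),
        -(0.875 * Real.exp (95 * z)) ≤ g z := by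
      intro z hz
      obtain ⟨hz1, hz2⟩ := hz
      have hq : -(0.875:ℝ) ≤ 1 - (15 / 2) * (z ^ 2 - z ^ 4) := by
        nlinarith [sq_nonneg (z ^ 2 - 1 / 2)]
      have hE2 : Real.exp (-η₀ * z ^ 2) ≤ Real.exp (95 * z) := by
        apply Real.exp_le_exp.mpr
        rw [hη₀]
        nlinarith [mul_nonneg hz1 (by linarith : (0:ℝ) ≤ 0.95 - z)]
      have hgz : g z = (1 - (15 / 2) * (z ^ 2 - z ^ 4)) * Real.exp (-η₀ * z ^ 2) := by
        rw [hgdef]; ring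
      rw [hgz]
      have hEpos := Real.exp_pos (-η₀ * z ^ 2)
      have key2 := mul_le_mul_of_nonneg_right hq hEpos.le
      have key3 := mul_le_mul_of_nonneg_left hE2 (by norm_num : (0:ℝ) ≤ 0.875)
      linarith
    have hmono := intervalIntegral.integral_mono_on (μ := volume) (by norm_num : (0:ℝ) ≤ 0.95)
      ((by fun_prop : Continuous fun z : ℝ =>
        -(0.875 * Real.exp (95 * z))).intervalIntegrable _ _)
      (hgc.intervalIntegrable _ _) hlow
    have hval : (∫ z in (0:ℝ)..(0.95:ℝ), -(0.875 * Real.exp (95 * z))) =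
        -(0.875 * ((Real.exp 90.25 - 1) / 95)) := by
      rw [intervalIntegral.integral_neg]
      rw [intervalIntegral.integral_const_mul]
      rw [exp95_int]
    rw [hval] at hmono
    exact hmono
  rw [qint, hsplit]
  have hX := Real.exp_pos (90.25:ℝ)
  nlinarith





noncomputable def f (η : ℝ) : ℝ := A 0 η / (A 2 η - A 4 η)

lemma hasDerivf (η : ℝ) : HasDerivAt f (Nf η / (A 2 η - A 4 η) ^ 2) η := by
  have h := (hasDerivA 0 η).div ((hasDerivA 2 η).sub (hasDerivA 4 η)) (posB η).ne'
  exact h.congr_deriv (by unfold Nf; simp only [Pi.sub_apply]; ring)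

lemma contf : Continuous f :=
  continuous_iff_continuousAt.mpr fun x => (hasDerivf x).continuousAt

lemma A00 : A 0 0 = 1 := by rw [A_zero]; norm_num
lemma A20 : A 2 0 = 1 / 3 := by rw [A_zero]; norm_num
lemma A40 : A 4 0 = 1 / 5 := by rw [A_zero]; norm_num
lemma A60 : A 6 0 = 1 / 7 := by rw [A_zero]; norm_num

lemma f0 : f 0 = 15 / 2 := by unfold f; rw [A00, A20, A40]; norm_num

lemma N0 : Nf 0 = 4 / 315 := by unfold Nf; rw [A00, A20, A40, A60]; norm_num

lemma derivf0 : deriv f 0 = 5 / 7 := by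
  rw [(hasDerivf 0).deriv, N0, A20, A40]
  norm_num

lemma strictMf : StrictMono Mf :=
  strictMono_of_deriv_pos fun x => by
    rw [(hasDerivM x).deriv]; exact mul_pos (Real.exp_pos x) (CSpos x)

lemma contMf : Continuous Mf :=
  continuous_iff_continuousAt.mpr fun x => (hasDerivM x).continuousAt

lemma exists_neg : ∃ c, -100 < c ∧ c < 0 ∧ Mf c < 0 := by
  have hf100 : f 0 < f (-100) := by
    rw [f0]
    unfold f
    rw [lt_div_iff₀ (posB (-100))]
    linarith [posdiff]
  obtain ⟨c, hc, hceq⟩ := exists_hasDerivAt_eq_slope f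
    (fun x => Nf x / (A 2 x - A 4 x) ^ 2) (by norm_num : (-100:ℝ) < 0)
    contf.continuousOn (fun x _ => hasDerivf x)
  refine ⟨c, hc.1, hc.2, ?_⟩
  have hslope : (f 0 - f (-100)) / (0 - (-100)) < 0 := by
    apply div_neg_of_neg_of_pos <;> [linarith; norm_num]
  rw [← hceq] at hslope
  have hN : Nf c < 0 := by
    by_contra h
    push_neg at h
    have := div_nonneg h (sq_nonneg (A 2 c - A 4 c))
    linarith
  exact mul_neg_of_pos_of_neg (Real.exp_pos c) hN

lemma exists_etas : ∃ ηs, ηs < 0 ∧ (∀ x < ηs, Nf x < 0) ∧ (∀ x, ηs < x → 0 < Nf x) := by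
  obtain ⟨c, hc1, hc2, hMc⟩ := exists_neg
  have hM0 : 0 < Mf 0 := by
    unfold Mf
    rw [N0, Real.exp_zero]
    norm_num
  obtain ⟨ηs, hmem, hMeq⟩ := intermediate_value_Ioo hc2.le contMf.continuousOn
    (show (0:ℝ) ∈ Set.Ioo (Mf c) (Mf 0) from ⟨hMc, hM0⟩)
  refine ⟨ηs, hmem.2, ?_, ?_⟩
  · intro x hx
    have h := strictMf hx
    rw [hMeq] at h
    unfold Mf at h
    by_contra hcon
    push_neg at hcon
    have := mul_nonneg (Real.exp_pos x).le hcon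
    linarith
  · intro x hx
    have h := strictMf hx
    rw [hMeq] at h
    unfold Mf at h
    by_contra hcon
    push_neg at hcon
    have := mul_nonpos_of_nonneg_of_nonpos (Real.exp_pos x).le hcon
    linarith

/-- With `f(η) = A₀(η)/(A₂(η) − A₄(η))`, there is a unique `η*` such that `f` is
strictly decreasing on `(−∞, η*]` and strictly increasing on `[η*, ∞)`;
moreover `η* < 0`, `f(0) = 15/2` and `f'(0) = 5/7`. -/
theorem stmt_17 :
    (∃! ηs : ℝ,
      StrictAntiOn (fun η : ℝ => A 0 η / (A 2 η - A 4 η)) (Set.Iic ηs) ∧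
      StrictMonoOn (fun η : ℝ => A 0 η / (A 2 η - A 4 η)) (Set.Ici ηs)) ∧
    (∀ ηs : ℝ,
      (StrictAntiOn (fun η : ℝ => A 0 η / (A 2 η - A 4 η)) (Set.Iic ηs) ∧
       StrictMonoOn (fun η : ℝ => A 0 η / (A 2 η - A 4 η)) (Set.Ici ηs)) →
      ηs < 0) ∧
    A 0 0 / (A 2 0 - A 4 0) = 15 / 2 ∧
    deriv (fun η : ℝ => A 0 η / (A 2 η - A 4 η)) 0 = 5 / 7 := by
  obtain ⟨ηs, hneg, hNneg, hNpos⟩ := exists_etas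
  have anti : StrictAntiOn f (Set.Iic ηs) := by
    apply strictAntiOn_of_deriv_neg (convex_Iic ηs) contf.continuousOn
    intro x hx
    rw [interior_Iic] at hx
    rw [(hasDerivf x).deriv]
    exact div_neg_of_neg_of_pos (hNneg x hx) (pow_pos (posB x) 2)
  have mono : StrictMonoOn f (Set.Ici ηs) := by
    apply strictMonoOn_of_deriv_pos (convex_Ici ηs) contf.continuousOn
    intro x hx
    rw [interior_Ici] at hx
    rw [(hasDerivf x).deriv]
    exact div_pos (hNpos x hx) (pow_pos (posB x) 2)
  have uniq : ∀ y : ℝ,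
      (StrictAntiOn f (Set.Iic y) ∧ StrictMonoOn f (Set.Ici y)) → y = ηs := by
    rintro y ⟨hy1, hy2⟩
    rcases lt_trichotomy y ηs with h | h | h
    · have h1 := hy2 (Set.self_mem_Ici) (Set.mem_Ici.mpr h.le) h
      have h2 := anti (Set.mem_Iic.mpr h.le) Set.self_mem_Iic h
      linarith
    · exact h
    · have h1 := hy1 (Set.mem_Iic.mpr h.le) Set.self_mem_Iic h
      have h2 := mono Set.self_mem_Ici (Set.mem_Ici.mpr h.le) h
      linarith
  refine ⟨⟨ηs, ⟨anti, mono⟩, uniq⟩, fun y hy => ?_, f0, derivf0⟩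
  rw [uniq y hy]
  exact hneg

end Aux
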